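/- With X̂ the completion of X as above, and for Y ⊆ X define Ŷ = {F ∈ X̂ : Y ∈ F}. If Y and Y' are complementary subsets of X, then Ŷ and the closure of Y' in X̂ are complementary subsets of X̂; in particular Ŷ is open in X̂. Moreover the collection {Ŷ : Y ∈ B} is a basis of the topology of X̂. -/

import Mathlib

/-- `C` is a finite cover of `X` by elements of `B`. -/
def IsCover {X : Type*} (B : Set (Set X)) (C : Finset (Set X)) : Prop :=
  ↑C ⊆ B ∧ ⋃₀ (↑C : Set (Set X)) = Set.univ

/-- The entourage `V(C) = ⋃_{Y ∈ C} Y × Y` associated to a finite cover `C`. -/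
def coverEnt {X : Type*} (C : Finset (Set X)) : Set (X × X) :=
  ⋃ Y ∈ C, Y ×ˢ Y

/-- A Cauchy filter for the uniformity of finite covers by elements of `B`:
a proper filter containing a `V(C)`-small set for every finite cover `C`. -/
def CauchyB {X : Type*} (B : Set (Set X)) (F : Filter X) : Prop :=
  F.NeBot ∧ ∀ C : Finset (Set X), IsCover B C → ∃ Y ∈ F, Y ×ˢ Y ⊆ coverEnt C

/-- A minimal Cauchy filter: a Cauchy filter such that any coarser Cauchy filter
equals it (in Mathlib's order, `F ≤ G` means `F` is finer than `G`). -/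
def MinCauchyB {X : Type*} (B : Set (Set X)) (F : Filter X) : Prop :=
  CauchyB B F ∧ ∀ G : Filter X, CauchyB B G → F ≤ G → G = F

/-- The Hausdorff completion `X̂`: the set of minimal Cauchy filters. -/
def Xhat {X : Type*} (B : Set (Set X)) : Type _ :=
  {F : Filter X // MinCauchyB B F}

/-- For `Y ⊆ X`, the subset `Ŷ = {F ∈ X̂ : Y ∈ F}` of the completion. -/
def hatSet {X : Type*} (B : Set (Set X)) (Y : Set X) : Set (Xhat B) :=
  {F | Y ∈ F.1}

/-- The neighborhood filter of a point `F` of `X̂`, generated by the sets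
`V̂(C)(F) = {F' : F and F' contain a common V(C)-small element}`. -/
def hatNhds {X : Type*} (B : Set (Set X)) (F : Xhat B) : Filter (Xhat B) :=
  Filter.generate {S | ∃ C : Finset (Set X), IsCover B C ∧
    S = {F' : Xhat B | ∃ Y : Set X, Y ∈ F.1 ∧ Y ∈ F'.1 ∧ Y ×ˢ Y ⊆ coverEnt C}}

/-- The topology of the completion `X̂`. -/
def hatTop {X : Type*} (B : Set (Set X)) : TopologicalSpace (Xhat B) :=
  TopologicalSpace.mkOfNhds (hatNhds B)

/-- The image in `X̂` of a subset `Y'` of `X`: the minimal Cauchy filters coarser than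
the neighborhood filter of some point of `Y'`. -/
def hatImg {X : Type*} (t : TopologicalSpace X) (B : Set (Set X)) (Y' : Set X) :
    Set (Xhat B) :=
  {F | ∃ x ∈ Y', @nhds X t x ≤ F.1}

namespace Stmt10

open Filter Set

variable {X : Type*} {B : Set (Set X)}

lemma mem_coverEnt {C : Finset (Set X)} {a b : X} :
    (a, b) ∈ coverEnt C ↔ ∃ W ∈ C, a ∈ W ∧ b ∈ W := by
  simp only [coverEnt, Set.mem_iUnion, Set.mem_prod]
  tauto

lemma sq_subset_coverEnt {C : Finset (Set X)} {Z : Set X} (hZ : Z ∈ C) :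
    Z ×ˢ Z ⊆ coverEnt C := fun p hp => by
  rcases p with ⟨a, b⟩
  exact mem_coverEnt.2 ⟨Z, hZ, hp.1, hp.2⟩

/-- `C'` star-refines `C`. -/
def StarRef (C' C : Finset (Set X)) : Prop :=
  ∀ x : X, ∃ Z ∈ C, ⋃₀ {Y | Y ∈ C' ∧ x ∈ Y} ⊆ Z

lemma small_subset {C' C : Finset (Set X)} (h : StarRef C' C) {S : Set X}
    (hS : S ×ˢ S ⊆ coverEnt C') {x : X} (hx : x ∈ S) :
    ∃ Z ∈ C, x ∈ Z ∧ S ⊆ Z := by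
  obtain ⟨Z, hZC, hZ⟩ := h x
  have hmem : ∀ y ∈ S, y ∈ Z := by
    intro y hy
    have : (x, y) ∈ coverEnt C' := hS ⟨hx, hy⟩
    obtain ⟨W, hW, hxW, hyW⟩ := mem_coverEnt.1 this
    exact hZ ⟨W, ⟨hW, hxW⟩, hyW⟩
  exact ⟨Z, hZC, hmem x hx, hmem⟩

lemma ent_mono_of_star {C' C : Finset (Set X)} (h : StarRef C' C) :
    coverEnt C' ⊆ coverEnt C := by
  rintro ⟨a, b⟩ hab
  obtain ⟨W, hW, haW, hbW⟩ := mem_coverEnt.1 hab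
  obtain ⟨Z, hZC, _, hWZ⟩ := small_subset h (sq_subset_coverEnt hW) haW
  exact mem_coverEnt.2 ⟨Z, hZC, hWZ haW, hWZ hbW⟩

lemma comp_of_star {C' C : Finset (Set X)} (h : StarRef C' C) {a c b : X}
    (h1 : (a, c) ∈ coverEnt C') (h2 : (c, b) ∈ coverEnt C') :
    (a, b) ∈ coverEnt C := by
  obtain ⟨W1, hW1, haW1, hcW1⟩ := mem_coverEnt.1 h1
  obtain ⟨W2, hW2, hcW2, hbW2⟩ := mem_coverEnt.1 h2
  obtain ⟨Z, hZC, hZ⟩ := h c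
  exact mem_coverEnt.2 ⟨Z, hZC, hZ ⟨W1, ⟨hW1, hcW1⟩, haW1⟩, hZ ⟨W2, ⟨hW2, hcW2⟩, hbW2⟩⟩

/-- star refinements exist, from (B_II). -/
lemma exists_star (hBII : ∀ C : Finset (Set X), IsCover B C → ∃ C' : Finset (Set X),
      IsCover B C' ∧ ∀ x : X, ∃ Z ∈ C, ⋃₀ {Y | Y ∈ C' ∧ x ∈ Y} ⊆ Z)
    {C : Finset (Set X)} (hC : IsCover B C) :
    ∃ C', IsCover B C' ∧ StarRef C' C := hBII C hC

lemma mem_of_cover {C : Finset (Set X)} (hC : IsCover B C) (x : X) :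
    ∃ W ∈ C, x ∈ W := by
  have := hC.2.symm ▸ Set.mem_univ x
  obtain ⟨W, hW, hxW⟩ := this
  exact ⟨W, hW, hxW⟩

/-- the ball `V(C)[A]`. -/
def ballC (C : Finset (Set X)) (A : Set X) : Set X :=
  {y | ∃ x ∈ A, (x, y) ∈ coverEnt C}

lemma subset_ballC {C : Finset (Set X)} (hC : IsCover B C) (A : Set X) :
    A ⊆ ballC C A := by
  intro x hx
  obtain ⟨W, hW, hxW⟩ := mem_of_cover hC x
  exact ⟨x, hx, mem_coverEnt.2 ⟨W, hW, hxW, hxW⟩⟩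

lemma ballC_mono {C1 C2 : Finset (Set X)} {A1 A2 : Set X}
    (hC : coverEnt C1 ⊆ coverEnt C2) (hA : A1 ⊆ A2) :
    ballC C1 A1 ⊆ ballC C2 A2 := by
  rintro y ⟨x, hx, hxy⟩
  exact ⟨x, hA hx, hC hxy⟩

lemma ballC_small {C'' C' C : Finset (Set X)} (h2 : StarRef C'' C') (h1 : StarRef C' C)
    {A : Set X} (hA : A ×ˢ A ⊆ coverEnt C'') :
    (ballC C'' A) ×ˢ (ballC C'' A) ⊆ coverEnt C := by
  rintro ⟨a, b⟩ ⟨⟨x, hx, hxa⟩, ⟨y, hy, hyb⟩⟩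
  have hxy : (x, y) ∈ coverEnt C'' := hA ⟨hx, hy⟩
  have hay : (a, y) ∈ coverEnt C' := by
    have hax : (a, x) ∈ coverEnt C'' := by
      obtain ⟨W, hW, h1', h2'⟩ := mem_coverEnt.1 hxa
      exact mem_coverEnt.2 ⟨W, hW, h2', h1'⟩
    exact comp_of_star h2 hax hxy
  exact comp_of_star h1 hay (ent_mono_of_star h2 hyb)

open Classical in
noncomputable def meetCov (C1 C2 : Finset (Set X)) : Finset (Set X) :=
  ((C1 ×ˢ C2).image fun p => p.1 ∩ p.2).filter fun s => s.Nonempty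

open Classical in
lemma mem_meetCov {C1 C2 : Finset (Set X)} {W : Set X} :
    W ∈ meetCov C1 C2 ↔ (∃ W1 ∈ C1, ∃ W2 ∈ C2, W1 ∩ W2 = W) ∧ W.Nonempty := by
  simp only [meetCov, Finset.mem_filter, Finset.mem_image, Finset.mem_product]
  constructor
  · rintro ⟨⟨⟨W1, W2⟩, ⟨h1, h2⟩, rfl⟩, hne⟩
    exact ⟨⟨W1, h1, W2, h2, rfl⟩, hne⟩
  · rintro ⟨⟨W1, h1, W2, h2, rfl⟩, hne⟩
    exact ⟨⟨⟨W1, W2⟩, ⟨h1, h2⟩, rfl⟩, hne⟩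

lemma meetCov_isCover
    (hBI : ∀ S : Finset (Set X), S.Nonempty → ↑S ⊆ B →
      (⋂₀ (↑S : Set (Set X))).Nonempty → ⋂₀ (↑S : Set (Set X)) ∈ B)
    {C1 C2 : Finset (Set X)} (h1 : IsCover B C1) (h2 : IsCover B C2) :
    IsCover B (meetCov C1 C2) := by
  classical
  constructor
  · intro W hW
    obtain ⟨⟨W1, hW1, W2, hW2, rfl⟩, hne⟩ := mem_meetCov.1 hW
    have key := hBI {W1, W2} (by simp) ?_ ?_
    · simpa using key
    · intro Z hZ
      simp only [Finset.coe_insert, Finset.coe_singleton, Set.mem_insert_iff,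
        Set.mem_singleton_iff] at hZ
      rcases hZ with rfl | rfl
      · exact h1.1 hW1
      · exact h2.1 hW2
    · simpa using hne
  · apply Set.eq_univ_of_forall
    intro x
    obtain ⟨W1, hW1, hx1⟩ := mem_of_cover h1 x
    obtain ⟨W2, hW2, hx2⟩ := mem_of_cover h2 x
    exact ⟨W1 ∩ W2, mem_meetCov.2 ⟨⟨W1, hW1, W2, hW2, rfl⟩, ⟨x, hx1, hx2⟩⟩, hx1, hx2⟩

lemma meetCov_ent_left {C1 C2 : Finset (Set X)} :
    coverEnt (meetCov C1 C2) ⊆ coverEnt C1 := by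
  rintro ⟨a, b⟩ hab
  obtain ⟨W, hW, haW, hbW⟩ := mem_coverEnt.1 hab
  obtain ⟨⟨W1, hW1, W2, hW2, rfl⟩, -⟩ := mem_meetCov.1 hW
  exact mem_coverEnt.2 ⟨W1, hW1, haW.1, hbW.1⟩

lemma meetCov_ent_right {C1 C2 : Finset (Set X)} :
    coverEnt (meetCov C1 C2) ⊆ coverEnt C2 := by
  rintro ⟨a, b⟩ hab
  obtain ⟨W, hW, haW, hbW⟩ := mem_coverEnt.1 hab
  obtain ⟨⟨W1, hW1, W2, hW2, rfl⟩, -⟩ := mem_meetCov.1 hW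
  exact mem_coverEnt.2 ⟨W2, hW2, haW.2, hbW.2⟩

/-- The minimal Cauchy filter refinement: generated by the sets `V(C)[A]`, `A ∈ H`. -/
noncomputable def minFil
    (hBI : ∀ S : Finset (Set X), S.Nonempty → ↑S ⊆ B →
      (⋂₀ (↑S : Set (Set X))).Nonempty → ⋂₀ (↑S : Set (Set X)) ∈ B)
    (hcov : ∃ C : Finset (Set X), IsCover B C) (H : Filter X) : Filter X where
  sets := {u | ∃ C : Finset (Set X), ∃ A : Set X,
    IsCover B C ∧ A ∈ H ∧ ballC C A ⊆ u}
  univ_sets := by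
    obtain ⟨C, hC⟩ := hcov
    exact ⟨C, Set.univ, hC, Filter.univ_mem, Set.subset_univ _⟩
  sets_of_superset := by
    rintro u v ⟨C, A, hC, hA, hball⟩ huv
    exact ⟨C, A, hC, hA, hball.trans huv⟩
  inter_sets := by
    rintro u v ⟨C1, A1, hC1, hA1, hb1⟩ ⟨C2, A2, hC2, hA2, hb2⟩
    refine ⟨meetCov C1 C2, A1 ∩ A2, meetCov_isCover hBI hC1 hC2,
      Filter.inter_mem hA1 hA2, ?_⟩
    intro y hy
    exact ⟨hb1 (ballC_mono meetCov_ent_left Set.inter_subset_left hy),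
      hb2 (ballC_mono meetCov_ent_right Set.inter_subset_right hy)⟩

section hyps

variable (hBI : ∀ S : Finset (Set X), S.Nonempty → ↑S ⊆ B →
      (⋂₀ (↑S : Set (Set X))).Nonempty → ⋂₀ (↑S : Set (Set X)) ∈ B)
  (hBII : ∀ C : Finset (Set X), IsCover B C → ∃ C' : Finset (Set X), IsCover B C' ∧
      ∀ x : X, ∃ Z ∈ C, ⋃₀ {Y | Y ∈ C' ∧ x ∈ Y} ⊆ Z)
  (hcov : ∃ C : Finset (Set X), IsCover B C)

include hBI hBII hcov

lemma mem_minFil {H : Filter X} {u : Set X} :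
    u ∈ minFil hBI hcov H ↔ ∃ C : Finset (Set X), ∃ A : Set X,
      IsCover B C ∧ A ∈ H ∧ ballC C A ⊆ u := Iff.rfl

lemma le_minFil (H : Filter X) : H ≤ minFil hBI hcov H := by
  intro u hu
  obtain ⟨C, A, hC, hA, hball⟩ := mem_minFil hBI hBII hcov |>.1 hu
  exact Filter.mem_of_superset hA ((subset_ballC hC A).trans hball)

lemma minFil_cauchy {H : Filter X} (hH : CauchyB B H) :
    CauchyB B (minFil hBI hcov H) := by
  refine ⟨hH.1.mono (le_minFil hBI hBII hcov H), ?_⟩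
  intro C hC
  obtain ⟨C', hC', hs1⟩ := hBII C hC
  obtain ⟨C'', hC'', hs2⟩ := hBII C' hC'
  obtain ⟨A, hA, hAsmall⟩ := hH.2 C'' hC''
  exact ⟨ballC C'' A, ⟨C'', A, hC'', hA, le_rfl⟩, ballC_small hs2 hs1 hAsmall⟩

lemma minFil_min {H : Filter X} (hH : CauchyB B H) {G : Filter X} (hG : CauchyB B G)
    (hle : minFil hBI hcov H ≤ G) : G = minFil hBI hcov H := by
  refine le_antisymm ?_ hle
  intro u hu
  obtain ⟨C, A, hC, hA, hball⟩ := mem_minFil hBI hBII hcov |>.1 hu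
  obtain ⟨C', hC', hs1⟩ := hBII C hC
  obtain ⟨S, hSG, hSsmall⟩ := hG.2 C' hC'
  have hSH : S ∈ H := le_minFil hBI hBII hcov H (hle hSG)
  have hne : (S ∩ A).Nonempty := by
    have : S ∩ A ∈ H := Filter.inter_mem hSH hA
    exact hH.1.nonempty_of_mem this
  obtain ⟨x, hxS, hxA⟩ := hne
  obtain ⟨Z, hZC, hxZ, hSZ⟩ := small_subset hs1 hSsmall hxS
  have : S ⊆ ballC C A := fun y hy =>
    ⟨x, hxA, mem_coverEnt.2 ⟨Z, hZC, hxZ, hSZ hy⟩⟩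
  exact Filter.mem_of_superset hSG (this.trans hball)

lemma minFil_minCauchy {H : Filter X} (hH : CauchyB B H) :
    MinCauchyB B (minFil hBI hcov H) :=
  ⟨minFil_cauchy hBI hBII hcov hH, fun G hG hle => minFil_min hBI hBII hcov hH hG hle⟩

lemma minFil_eq_self {F : Filter X} (hF : MinCauchyB B F) : minFil hBI hcov F = F :=
  hF.2 _ (minFil_cauchy hBI hBII hcov hF.1) (le_minFil hBI hBII hcov F)

/-- Every element of a minimal Cauchy filter contains a ball. -/
lemma exists_ball_of_min {F : Filter X} (hF : MinCauchyB B F) {u : Set X} (hu : u ∈ F) :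
    ∃ C : Finset (Set X), ∃ A : Set X, IsCover B C ∧ A ∈ F ∧ ballC C A ⊆ u := by
  have := minFil_eq_self hBI hBII hcov hF
  rw [← this] at hu
  exact mem_minFil hBI hBII hcov |>.1 hu

/-- Every cover has a member belonging to any given Cauchy filter. -/
lemma exists_mem_cover_mem {F : Filter X} (hF : CauchyB B F)
    {C : Finset (Set X)} (hC : IsCover B C) : ∃ Z ∈ C, Z ∈ F := by
  obtain ⟨C', hC', hs⟩ := hBII C hC
  obtain ⟨A, hA, hAsmall⟩ := hF.2 C' hC'
  obtain ⟨x, hx⟩ := hF.1.nonempty_of_mem hA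
  obtain ⟨Z, hZC, hxZ, hAZ⟩ := small_subset hs hAsmall hx
  exact ⟨Z, hZC, Filter.mem_of_superset hA hAZ⟩

end hyps

end Stmt10



namespace Stmt10

open Filter Set Topology

section main

variable {X : Type*} {B : Set (Set X)}
variable (hBI : ∀ S : Finset (Set X), S.Nonempty → ↑S ⊆ B →
      (⋂₀ (↑S : Set (Set X))).Nonempty → ⋂₀ (↑S : Set (Set X)) ∈ B)
  (hBII : ∀ C : Finset (Set X), IsCover B C → ∃ C' : Finset (Set X), IsCover B C' ∧
      ∀ x : X, ∃ Z ∈ C, ⋃₀ {Y | Y ∈ C' ∧ x ∈ Y} ⊆ Z)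
  (hcov : ∃ C : Finset (Set X), IsCover B C)

/-- The basic neighborhood `V̂(C)(F)`. -/
def hatBall (B : Set (Set X)) (F : Xhat B) (C : Finset (Set X)) : Set (Xhat B) :=
  {F' : Xhat B | ∃ Y : Set X, Y ∈ F.1 ∧ Y ∈ F'.1 ∧ Y ×ˢ Y ⊆ coverEnt C}

lemma hatBall_mem_nhds {F : Xhat B} {C : Finset (Set X)} (hC : IsCover B C) :
    hatBall B F C ∈ hatNhds B F :=
  Filter.le_generate_iff.1 le_rfl ⟨C, hC, rfl⟩

lemma hatBall_mono {F : Xhat B} {C1 C2 : Finset (Set X)}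
    (h : coverEnt C1 ⊆ coverEnt C2) : hatBall B F C1 ⊆ hatBall B F C2 := by
  rintro F' ⟨Y, h1, h2, h3⟩
  exact ⟨Y, h1, h2, h3.trans h⟩

lemma isOpen_hatTop_iff {U : Set (Xhat B)} :
    IsOpen[hatTop B] U ↔ ∀ F ∈ U, U ∈ hatNhds B F := Iff.rfl

include hBI hcov in
/-- From an open set, extract a single basic neighborhood. -/
lemma exists_hatBall_subset {U : Set (Xhat B)} {F : Xhat B}
    (hU : IsOpen[hatTop B] U) (hF : F ∈ U) :
    ∃ C : Finset (Set X), IsCover B C ∧ hatBall B F C ⊆ U := by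
  have hUmem : U ∈ hatNhds B F := hU F hF
  rw [hatNhds, Filter.mem_generate_iff] at hUmem
  obtain ⟨ts, hts, htsfin, htsU⟩ := hUmem
  have key : ∀ ts' : Set (Set (Xhat B)), ts'.Finite →
      ts' ⊆ {S | ∃ C : Finset (Set X), IsCover B C ∧
        S = {F' : Xhat B | ∃ Y : Set X, Y ∈ F.1 ∧ Y ∈ F'.1 ∧ Y ×ˢ Y ⊆ coverEnt C}} →
      ∃ C : Finset (Set X), IsCover B C ∧ hatBall B F C ⊆ ⋂₀ ts' := by
    intro ts' htsfin'
    refine Set.Finite.induction_on ts' htsfin' ?_ ?_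
    · intro _
      obtain ⟨C, hC⟩ := hcov
      exact ⟨C, hC, by simp⟩
    · rintro S ts'' hSts htsfin'' ih hsub
      obtain ⟨C2, hC2, hsub2⟩ := ih (fun s hs => hsub (Set.mem_insert_of_mem _ hs))
      obtain ⟨C1, hC1, hSeq⟩ := hsub (Set.mem_insert _ _)
      refine ⟨meetCov C1 C2, meetCov_isCover hBI hC1 hC2, ?_⟩
      rw [Set.sInter_insert, hSeq]
      intro F' hF'
      exact ⟨hatBall_mono meetCov_ent_left hF',
        hsub2 (hatBall_mono meetCov_ent_right hF')⟩
  obtain ⟨C, hC, hsub⟩ := key ts htsfin hts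
  exact ⟨C, hC, hsub.trans htsU⟩

include hBI hBII hcov in
/-- Each `Ŷ` is open, for an arbitrary subset `Y`. -/
lemma isOpen_hatSet (Y : Set X) : IsOpen[hatTop B] (hatSet B Y) := by
  intro F hFY
  obtain ⟨C, A, hC, hA, hball⟩ := exists_ball_of_min hBI hBII hcov F.2 hFY
  obtain ⟨C', hC', hs⟩ := hBII C hC
  refine Filter.mem_of_superset (hatBall_mem_nhds hC') ?_
  rintro F' ⟨Z, hZF, hZF', hZsmall⟩
  have hne : (Z ∩ A).Nonempty := F.2.1.1.nonempty_of_mem (Filter.inter_mem hZF hA)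
  obtain ⟨x, hxZ, hxA⟩ := hne
  obtain ⟨W, hWC, hxW, hZW⟩ := small_subset hs hZsmall hxZ
  have : Z ⊆ Y := fun y hy => hball ⟨x, hxA, mem_coverEnt.2 ⟨W, hWC, hxW, hZW hy⟩⟩
  exact Filter.mem_of_superset hZF' this

variable {t : TopologicalSpace X}

lemma nhds_cauchyB (hBopen : ∀ Y ∈ B, @IsOpen X t Y) (x : X) :
    CauchyB B (@nhds X t x) := by
  letI := t
  refine ⟨nhds_neBot, ?_⟩
  intro C hC
  obtain ⟨W, hW, hxW⟩ := mem_of_cover hC x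
  exact ⟨W, IsOpen.mem_nhds (hBopen W (hC.1 hW)) hxW, sq_subset_coverEnt hW⟩

include hBI hBII hcov in
lemma disjoint_hat_img {Y' : Set X} :
    hatSet B Y'ᶜ ∩ hatImg t B Y' = ∅ := by
  ext G
  simp only [Set.mem_inter_iff, Set.mem_empty_iff_false, iff_false, not_and]
  rintro hGY' ⟨x, hxY', hle⟩
  letI := t
  exact (mem_of_mem_nhds (hle hGY')) hxY'

include hBI hBII hcov in
lemma mem_closure_iff_forall (hBopen : ∀ Y ∈ B, @IsOpen X t Y) {Y' : Set X} {F : Xhat B} :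
    F ∈ @closure (Xhat B) (hatTop B) (hatImg t B Y') ↔
      ∀ A ∈ F.1, (A ∩ Y').Nonempty := by
  letI : TopologicalSpace (Xhat B) := hatTop B
  constructor
  · intro hcl A hA
    by_contra hne
    have hAY : A ⊆ Y'ᶜ := fun a ha hay => hne ⟨a, ha, hay⟩
    have hYF : Y'ᶜ ∈ F.1 := Filter.mem_of_superset hA hAY
    have := mem_closure_iff.1 hcl (hatSet B Y'ᶜ) (isOpen_hatSet hBI hBII hcov Y'ᶜ) hYF
    rw [disjoint_hat_img hBI hBII hcov] at this
    exact Set.not_nonempty_empty this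
  · intro h
    rw [mem_closure_iff]
    intro U hUopen hFU
    obtain ⟨C, hC, hball⟩ := exists_hatBall_subset hBI hcov hUopen hFU
    obtain ⟨C', hC', hs1⟩ := hBII C hC
    obtain ⟨C'', hC'', hs2⟩ := hBII C' hC'
    obtain ⟨A, hA, hAsmall⟩ := F.2.1.2 C'' hC''
    obtain ⟨x, hxA, hxY'⟩ := h A hA
    obtain ⟨W, hW, hxW⟩ := mem_of_cover hC'' x
    have hGmin : MinCauchyB B (minFil hBI hcov (@nhds X t x)) :=
      minFil_minCauchy hBI hBII hcov (nhds_cauchyB hBopen x)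
    refine ⟨⟨minFil hBI hcov (@nhds X t x), hGmin⟩, ?_, x, hxY',
      le_minFil hBI hBII hcov _⟩
    apply hball
    refine ⟨ballC C'' W, ?_, ?_, ballC_small hs2 hs1 (sq_subset_coverEnt hW)⟩
    · exact Filter.mem_of_superset hA
        (fun a ha => ⟨x, hxW, hAsmall (Set.mk_mem_prod hxA ha)⟩)
    · letI := t
      exact ⟨C'', W, hC'', IsOpen.mem_nhds (hBopen W (hC''.1 hW)) hxW, le_rfl⟩

end main

end Stmt10



/-- With `X̂` the Hausdorff completion of `X` for the uniformity of finite covers by a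
family `B` of open sets satisfying (B_I) and (B_II): if `Y` and `Y'` are complementary
subsets of `X`, then `Ŷ = {F ∈ X̂ : Y ∈ F}` and the closure of `Y'` in `X̂` are
complementary subsets of `X̂`; in particular `Ŷ` is open in `X̂`.  Moreover the
collection `{Ŷ : Y ∈ B}` is a basis of the topology of `X̂`. -/
theorem stmt10 {X : Type*} (t : TopologicalSpace X) (B : Set (Set X))
    (hBopen : ∀ Y ∈ B, @IsOpen X t Y)
    (hBI : ∀ S : Finset (Set X), S.Nonempty → ↑S ⊆ B →
      (⋂₀ (↑S : Set (Set X))).Nonempty → ⋂₀ (↑S : Set (Set X)) ∈ B)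
    (hBII : ∀ C : Finset (Set X), IsCover B C → ∃ C' : Finset (Set X), IsCover B C' ∧
      ∀ x : X, ∃ Z ∈ C, ⋃₀ {Y | Y ∈ C' ∧ x ∈ Y} ⊆ Z)
    (hcov : ∃ C : Finset (Set X), IsCover B C) :
    (∀ Y Y' : Set X, Y' = Yᶜ →
      hatSet B Y = (@closure (Xhat B) (hatTop B) (hatImg t B Y'))ᶜ ∧
      @IsOpen (Xhat B) (hatTop B) (hatSet B Y)) ∧
    @TopologicalSpace.IsTopologicalBasis (Xhat B) (hatTop B)
      {S : Set (Xhat B) | ∃ Y ∈ B, S = hatSet B Y}  := by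
  letI : TopologicalSpace (Xhat B) := hatTop B
  constructor
  · rintro Y Y' rfl
    constructor
    · ext F
      simp only [hatSet, Set.mem_setOf_eq, Set.mem_compl_iff]
      rw [Stmt10.mem_closure_iff_forall hBI hBII hcov hBopen]
      constructor
      · intro hY h
        obtain ⟨x, hxY, hxY'⟩ := h Y hY
        exact hxY' hxY
      · intro h
        by_contra hY
        apply h
        intro A hA
        by_contra hne
        exact hY (Filter.mem_of_superset hA
          (fun a ha => by_contra fun hay => hne ⟨a, ha, hay⟩))
    · exact Stmt10.isOpen_hatSet hBI hBII hcov Y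
  · refine TopologicalSpace.isTopologicalBasis_of_isOpen_of_nhds ?_ ?_
    · rintro U ⟨Y, hYB, rfl⟩
      exact Stmt10.isOpen_hatSet hBI hBII hcov Y
    · intro F U hFU hUopen
      obtain ⟨C, hC, hball⟩ := Stmt10.exists_hatBall_subset hBI hcov hUopen hFU
      obtain ⟨Z, hZC, hZF⟩ := Stmt10.exists_mem_cover_mem hBI hBII hcov F.2.1 hC
      refine ⟨hatSet B Z, ⟨Z, hC.1 hZC, rfl⟩, hZF, ?_⟩
      intro F' hF'
      exact hball ⟨Z, hZF, hF', Stmt10.sq_subset_coverEnt hZC⟩
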